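/- Let X be a reflexive Kadec real Banach space and C ⊆ X a nonempty closed set. Then every x ∈ Ω(C) has a nearest point in C, i.e., Ω(C) ⊆ N(C). -/

import Mathlib

open Metric Filter Topology
open NormedSpace

/-- A real normed space is reflexive if the canonical embedding into its double dual
is surjective. -/
def IsReflexiveSpace (X : Type*) [NormedAddCommGroup X] [NormedSpace ℝ X] : Prop :=
  Function.Surjective (NormedSpace.inclusionInDoubleDual ℝ X)

/-- A real normed space is (sequentially) Kadec if every sequence converging weakly to `x`
whose norms converge to `‖x‖` converges to `x` in norm. -/
def IsKadecSpace (X : Type*) [NormedAddCommGroup X] [NormedSpace ℝ X] : Prop :=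
  ∀ (u : ℕ → X) (x : X),
    (∀ f : X →L[ℝ] ℝ, Tendsto (fun n => f (u n)) atTop (𝓝 (f x))) →
    Tendsto (fun n => ‖u n‖) atTop (𝓝 ‖x‖) →
    Tendsto u atTop (𝓝 x)

/-- The set of points of `X` that have a nearest point in `C`. -/
def NearestPoints {X : Type*} [NormedAddCommGroup X] (C : Set X) : Set X :=
  {x | ∃ z ∈ C, ‖x - z‖ = Metric.infDist x C}

/-- The set `Ω(C)`: points `x ∉ C` for which there is a norm-one functional `x*` such that
for every `ε > 0` there is `δ > 0` with
`inf_{z ∈ C ∩ B(x, d_C(x)+δ)} x*(x-z) > (1-ε) d_C(x)`. -/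
def OmegaSet {X : Type*} [NormedAddCommGroup X] [NormedSpace ℝ X] (C : Set X) : Set X :=
  {x | x ∉ C ∧ ∃ f : X →L[ℝ] ℝ, ‖f‖ = 1 ∧ ∀ ε > (0 : ℝ), ∃ δ > (0 : ℝ),
    sInf ((fun z => f (x - z)) '' (C ∩ Metric.closedBall x (Metric.infDist x C + δ)))
      > (1 - ε) * Metric.infDist x C}

section Aux

theorem exists_norming_finset {Y : Type*} [NormedAddCommGroup Y] [NormedSpace ℝ Y]
    (E : Submodule ℝ (StrongDual ℝ Y)) (hE : FiniteDimensional ℝ E) :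
    ∃ F : Finset Y, (∀ y ∈ F, ‖y‖ ≤ 1) ∧
      ∀ v ∈ E, ∃ y ∈ F, ‖v‖ ≤ 2 * |v y| := by
  classical
  haveI := hE
  -- for each unit vector u in E, a norming y
  have key : ∀ u : E, ‖u‖ = 1 → ∃ y : Y, ‖y‖ ≤ 1 ∧ 3/4 < |(u : StrongDual ℝ Y) y| := by
    intro u hu
    by_contra h
    push_neg at h
    have hb : ‖(u : StrongDual ℝ Y)‖ ≤ 3/4 := by
      apply ContinuousLinearMap.opNorm_le_bound _ (by norm_num)
      intro y
      rcases eq_or_ne y 0 with rfl | hy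
      · simp
      · have hny : (0:ℝ) < ‖y‖ := norm_pos_iff.2 hy
        have := h (‖y‖⁻¹ • y) (by
          rw [norm_smul, norm_inv, norm_norm]
          exact le_of_eq (inv_mul_cancel₀ hny.ne'))
        rw [map_smul] at this
        have h2 : |(u : StrongDual ℝ Y) y| ≤ (3/4) * ‖y‖ := by
          rw [smul_eq_mul, abs_mul, abs_inv, abs_norm] at this
          calc |(u : StrongDual ℝ Y) y| = ‖y‖ * (‖y‖⁻¹ * |(u : StrongDual ℝ Y) y|) := by
                field_simp
            _ ≤ ‖y‖ * (3/4) := by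
                exact mul_le_mul_of_nonneg_left this hny.le
            _ = 3/4 * ‖y‖ := mul_comm _ _
        simpa [Real.norm_eq_abs] using h2
    have : ‖(u : StrongDual ℝ Y)‖ = 1 := by rw [← hu]; rfl
    linarith [this ▸ hb]
  set S : Set E := sphere (0 : E) 1 with hS
  have hScpt : IsCompact S := isCompact_sphere 0 1
  obtain ⟨t, ht, hcov⟩ := hScpt.elim_nhds_subcover (fun u => ball u (1/8))
    (fun u _ => ball_mem_nhds u (by norm_num))
  -- choice function
  have hchoice : ∀ u ∈ t, ∃ y : Y, ‖y‖ ≤ 1 ∧ 3/4 < |(u : StrongDual ℝ Y) y| := by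
    intro u hu
    exact key u (by have h := ht u hu; rw [hS] at h; exact (mem_sphere_zero_iff_norm (E := E)).1 h)
  choose! yfun hy1 hy2 using hchoice
  refine ⟨insert 0 (t.image yfun), ?_, ?_⟩
  · intro y hy
    rcases Finset.mem_insert.1 hy with rfl | hy
    · simp
    · obtain ⟨u, hu, rfl⟩ := Finset.mem_image.1 hy
      exact hy1 u hu
  · intro v hv
    rcases eq_or_ne v 0 with rfl | hvne
    · exact ⟨0, Finset.mem_insert_self _ _, by simp⟩
    · have hnv : (0:ℝ) < ‖v‖ := norm_pos_iff.2 hvne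
      set u : E := ‖v‖⁻¹ • ⟨v, hv⟩ with hu
      have hucoe : (u : StrongDual ℝ Y) = ‖v‖⁻¹ • v := by simp [hu]
      have hun : ‖u‖ = 1 := by
        rw [show ‖u‖ = ‖(u : StrongDual ℝ Y)‖ from rfl, hucoe, norm_smul, norm_inv,
          norm_norm, inv_mul_cancel₀ hnv.ne']
      have huS : u ∈ S := by rw [hS]; exact (mem_sphere_zero_iff_norm (E := E)).2 hun
      obtain ⟨j, hjt, hjball⟩ := Set.mem_iUnion₂.1 (hcov huS)
      refine ⟨yfun j, Finset.mem_insert_of_mem (Finset.mem_image_of_mem _ hjt), ?_⟩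
      have hdist : ‖u - j‖ < 1/8 := by
        have := mem_ball.1 hjball
        exact lt_of_eq_of_lt (dist_eq_norm u j).symm this
      have hju := hy2 j hjt
      have h1 : |(u : StrongDual ℝ Y) (yfun j)| ≥ 3/4 - 1/8 := by
        have hdiff : |((j : StrongDual ℝ Y) - (u : StrongDual ℝ Y)) (yfun j)| ≤ 1/8 := by
          calc |((j : StrongDual ℝ Y) - (u : StrongDual ℝ Y)) (yfun j)|
              ≤ ‖(j : StrongDual ℝ Y) - (u : StrongDual ℝ Y)‖ * ‖yfun j‖ := by
                exact ((j : StrongDual ℝ Y) - (u : StrongDual ℝ Y)).le_opNorm _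
            _ ≤ ‖(j : StrongDual ℝ Y) - (u : StrongDual ℝ Y)‖ * 1 := by
                exact mul_le_mul_of_nonneg_left (hy1 j hjt) (norm_nonneg _)
            _ ≤ 1/8 := by
                rw [mul_one]
                have h3 : ‖(j : StrongDual ℝ Y) - (u : StrongDual ℝ Y)‖ = ‖j - u‖ := by
                  rw [← Submodule.coe_sub]; rfl
                rw [h3]; exact (norm_sub_rev j u).trans_le hdist.le
        have := abs_sub_abs_le_abs_sub ((j : StrongDual ℝ Y) (yfun j)) ((u : StrongDual ℝ Y) (yfun j))
        simp only [ContinuousLinearMap.sub_apply] at hdiff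
        linarith
      have hcoe : (u : StrongDual ℝ Y) (yfun j) = ‖v‖⁻¹ * v (yfun j) := by
        rw [hucoe]; simp
      rw [hcoe, abs_mul, abs_inv, abs_norm] at h1
      have : ‖v‖ * (3/4 - 1/8) ≤ |v (yfun j)| := by
        calc ‖v‖ * (3/4 - 1/8) ≤ ‖v‖ * (‖v‖⁻¹ * |v (yfun j)|) :=
            mul_le_mul_of_nonneg_left h1 hnv.le
          _ = |v (yfun j)| := by field_simp
      nlinarith

theorem reflexive_weak_seq_compact {X : Type*} [NormedAddCommGroup X] [NormedSpace ℝ X]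
    (hrefl : Function.Surjective (inclusionInDoubleDual ℝ X))
    (w : ℕ → X) (M : ℝ) (hM : ∀ k, ‖w k‖ ≤ M) :
    ∃ (z : X) (n : ℕ → ℕ), StrictMono n ∧
      ∀ f : StrongDual ℝ X, Tendsto (fun k => f (w (n k))) atTop (𝓝 (f z)) := by
  classical
  set J := inclusionInDoubleDual ℝ X with hJdef
  have hJnorm : ∀ x : X, ‖J x‖ = ‖x‖ := fun x => (inclusionInDoubleDualLi ℝ).norm_map x
  have hJapp : ∀ (x : X) (f : StrongDual ℝ X), J x f = f x := fun x f => rfl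
  set K : Set (WeakDual ℝ (StrongDual ℝ X)) := WeakDual.toStrongDual ⁻¹' closedBall 0 M with hKdef
  have hK : IsCompact K := WeakDual.isCompact_closedBall (𝕜 := ℝ) 0 M
  set Jw : ℕ → WeakDual ℝ (StrongDual ℝ X) :=
    fun k => StrongDual.toWeakDual (J (w k)) with hJw
  have hJwapp : ∀ k f, Jw k f = f (w k) := fun k f => rfl
  have hJwK : ∀ k, Jw k ∈ K := by
    intro k
    simp only [hKdef, Set.mem_preimage, mem_closedBall_zero_iff (E := StrongDual ℝ (StrongDual ℝ X))]
    have : WeakDual.toStrongDual (Jw k) = J (w k) := rfl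
    rw [this, hJnorm]
    exact hM k
  -- cluster point extraction
  have cluster : ∀ u : ℕ → WeakDual ℝ (StrongDual ℝ X), (∀ k, u k ∈ K) →
      ∃ χ, χ ∈ K ∧ MapClusterPt χ atTop u := by
    intro u hu
    have hle : map u atTop ≤ 𝓟 K := le_principal_iff.2 (mem_map.2 (Eventually.of_forall hu))
    haveI : (map u atTop).NeBot := map_neBot
    obtain ⟨χ, hχK, hχ⟩ := hK.exists_clusterPt hle
    exact ⟨χ, hχK, hχ⟩
  obtain ⟨φ, hφK, hφ⟩ := cluster Jw hJwK
  obtain ⟨z, hz⟩ := hrefl (WeakDual.toStrongDual φ)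
  have hφapp : ∀ f : StrongDual ℝ X, φ f = f z := by
    intro f
    rw [← WeakDual.toStrongDual_apply, ← hz, hJapp]
  -- picking the next element of the subsequence
  have pick : ∀ (N : ℕ) (Φ : Finset (StrongDual ℝ X)) (η : ℝ), 0 < η →
      ∃ m, N < m ∧ ∀ f ∈ Φ, |φ f - f (w m)| ≤ η := by
    intro N Φ η hη
    set U : Set (WeakDual ℝ (StrongDual ℝ X)) := {ψ | ∀ f ∈ Φ, |φ f - ψ f| < η} with hU
    have hUopen : IsOpen U := by
      have : U = ⋂ f ∈ Φ, {ψ : WeakDual ℝ (StrongDual ℝ X) | |φ f - ψ f| < η} := by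
        ext ψ; simp [hU]
      rw [this]
      refine isOpen_biInter_finset fun f _ => ?_
      have hc : Continuous fun ψ : WeakDual ℝ (StrongDual ℝ X) => |φ f - ψ f| :=
        (continuous_const.sub (WeakDual.eval_continuous f)).abs
      exact isOpen_Iio.preimage hc
    have hUmem : U ∈ 𝓝 φ := hUopen.mem_nhds (by simp [hU, hη])
    have hfreq := (mapClusterPt_iff_frequently.1 hφ) U hUmem
    obtain ⟨m, hm1, hm2⟩ := frequently_atTop.1 hfreq (N + 1)
    exact ⟨m, by omega, fun f hf => by
      have := hm2 f hf
      rw [hJwapp] at this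
      exact this.le⟩
  -- the recursive construction step
  have hstep : ∀ (k : ℕ) (st : ℕ × Finset (StrongDual ℝ X)),
      ∃ st' : ℕ × Finset (StrongDual ℝ X),
        st.1 < st'.1 ∧ st.2 ⊆ st'.2 ∧
        (∀ f ∈ st'.2, f ∈ st.2 ∨ ‖f‖ ≤ 1) ∧
        (∀ v ∈ Submodule.span ℝ (J '' (insert z (w '' Set.Iic st.1))),
          ∃ f ∈ st'.2, ‖v‖ ≤ 2 * |v f|) ∧
        (∀ f ∈ st'.2, |φ f - f (w st'.1)| ≤ 1 / (k + 1)) := by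
    intro k st
    have hfin : (J '' (insert z (w '' Set.Iic st.1))).Finite :=
      (((Set.finite_Iic st.1).image w).insert z).image J
    haveI : FiniteDimensional ℝ
        (Submodule.span ℝ (J '' (insert z (w '' Set.Iic st.1)))) :=
      FiniteDimensional.span_of_finite ℝ hfin
    obtain ⟨F, hF1, hF2⟩ :=
      exists_norming_finset (Submodule.span ℝ (J '' (insert z (w '' Set.Iic st.1))))
        inferInstance
    obtain ⟨m, hm1, hm2⟩ := pick st.1 (st.2 ∪ F) (1 / (k + 1)) (by positivity)
    refine ⟨(m, st.2 ∪ F), hm1, Finset.subset_union_left, ?_, ?_, hm2⟩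
    · intro f hf
      rcases Finset.mem_union.1 hf with h | h
      · exact Or.inl h
      · exact Or.inr (hF1 f h)
    · intro v hv
      obtain ⟨f, hf1, hf2⟩ := hF2 v hv
      exact ⟨f, Finset.mem_union_right _ hf1, hf2⟩
  choose stepfun hlt hsub hunit hnorm happrox using hstep
  set s : ℕ → ℕ × Finset (StrongDual ℝ X) :=
    fun k => Nat.rec (stepfun 0 (0, ∅)) (fun k ih => stepfun (k + 1) ih) k with hs
  have hs0 : s 0 = stepfun 0 (0, ∅) := rfl
  have hsSucc : ∀ k, s (k + 1) = stepfun (k + 1) (s k) := fun k => rfl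
  set n : ℕ → ℕ := fun k => (s k).1 with hn
  set Φs : ℕ → Finset (StrongDual ℝ X) := fun k => (s k).2 with hΦs
  have hmono : StrictMono n := by
    apply strictMono_nat_of_lt_succ
    intro k
    have := hlt (k + 1) (s k)
    rwa [← hsSucc k] at this
  have hΦmono : ∀ k, Φs k ⊆ Φs (k + 1) := by
    intro k
    have := hsub (k + 1) (s k)
    rwa [← hsSucc k] at this
  have hΦle : ∀ i k, i ≤ k → Φs i ⊆ Φs k := by
    intro i k hik
    induction k with
    | zero =>
      have : i = 0 := by omega
      subst this; exact Finset.Subset.refl _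
    | succ k ih =>
      rcases Nat.lt_or_ge i (k + 1) with h | h
      · exact (ih (by omega)).trans (hΦmono k)
      · have : i = k + 1 := by omega
        subst this; exact Finset.Subset.refl _
  have happrox' : ∀ k, ∀ f ∈ Φs k, |φ f - f (w (n k))| ≤ 1 / (k + 1) := by
    intro k
    cases k with
    | zero => exact happrox 0 (0, ∅)
    | succ k =>
      have := happrox (k + 1) (s k)
      rwa [← hsSucc k] at this
  have hnorm' : ∀ k, ∀ v ∈ Submodule.span ℝ (J '' (insert z (w '' Set.Iic (n k)))),
      ∃ f ∈ Φs (k + 1), ‖v‖ ≤ 2 * |v f| := by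
    intro k
    have := hnorm (k + 1) (s k)
    rwa [← hsSucc k] at this
  have hunit' : ∀ k, ∀ f ∈ Φs k, ‖f‖ ≤ 1 := by
    intro k
    induction k with
    | zero =>
      intro f hf
      rcases hunit 0 (0, ∅) f hf with h | h
      · simp at h
      · exact h
    | succ k ih =>
      intro f hf
      have := hunit (k + 1) (s k)
      rw [← hsSucc k] at this
      rcases this f hf with h | h
      · exact ih f h
      · exact h
  -- convergence of evaluations on the accumulated functionals
  have htendΦ : ∀ i, ∀ f ∈ Φs i, Tendsto (fun k => f (w (n k))) atTop (𝓝 (φ f)) := by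
    intro i f hf
    rw [tendsto_iff_dist_tendsto_zero]
    refine squeeze_zero' (g := fun k : ℕ => 1 / ((k : ℝ) + 1))
      (Eventually.of_forall fun k => dist_nonneg) ?_ ?_
    · filter_upwards [eventually_ge_atTop i] with k hk
      have := happrox' k f (hΦle i k hk hf)
      rw [Real.dist_eq, abs_sub_comm]
      exact this
    · exact tendsto_one_div_add_atTop_nhds_zero_nat
  -- uniqueness of cluster points of the subsequence
  set Jwn : ℕ → WeakDual ℝ (StrongDual ℝ X) := fun k => Jw (n k) with hJwn
  have clusterEval : ∀ (χ : WeakDual ℝ (StrongDual ℝ X)), MapClusterPt χ atTop Jwn →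
      ∀ f : StrongDual ℝ X, MapClusterPt (χ f) atTop (fun k => f (w (n k))) := by
    intro χ hχ f
    have hc : ContinuousAt (fun ψ : WeakDual ℝ (StrongDual ℝ X) => ψ f) χ :=
      (WeakDual.eval_continuous f).continuousAt
    exact MapClusterPt.continuousAt_comp hc hχ
  -- every cluster point of the subsequence equals φ
  have key0 : ∀ (z' : X), (∀ i, ∀ f ∈ Φs i, f z' = φ f) →
      ∀ i, ∀ f ∈ Φs i, J (z - z') f = 0 := by
    intro z' hz' i f hf
    rw [hJapp, map_sub, hz' i f hf, hφapp f]
    ring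
  have huniq : ∀ χ ∈ K, MapClusterPt χ atTop Jwn → χ = φ := by
    intro χ _ hχ
    obtain ⟨z', hz'⟩ := hrefl (WeakDual.toStrongDual χ)
    have hχapp : ∀ f : StrongDual ℝ X, χ f = f z' := by
      intro f
      rw [← WeakDual.toStrongDual_apply, ← hz', hJapp]
    have hψeval : ∀ i, ∀ f ∈ Φs i, f z' = φ f := by
      intro i f hf
      have h1 : MapClusterPt (χ f) atTop (fun k => f (w (n k))) := clusterEval χ hχ f
      have h2 := htendΦ i f hf
      have h3 : ClusterPt (χ f) (𝓝 (φ f)) := ClusterPt.mono h1.clusterPt h2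
      have h4 : χ f = φ f := eq_of_nhds_neBot h3.neBot
      rw [← h4, hχapp]
    set Msp := Submodule.span ℝ (insert z (Set.range fun k => w (n k))) with hMsp
    set Mc := Msp.topologicalClosure with hMc
    have hzM : z ∈ Mc := Msp.le_topologicalClosure (Submodule.subset_span (Set.mem_insert _ _))
    have hwM : ∀ k, w (n k) ∈ Mc := fun k =>
      Msp.le_topologicalClosure (Submodule.subset_span (Set.mem_insert_of_mem _ ⟨k, rfl⟩))
    -- z' lies in the closed span, by Hahn-Banach separation
    have hz'M : z' ∈ Mc := by
      by_contra hcon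
      obtain ⟨g, u, hgu, hguz⟩ :=
        geometric_hahn_banach_closed_point (Mc.convex) (Msp.isClosed_topologicalClosure) hcon
      have hg0 : ∀ a ∈ Mc, g a = 0 := by
        intro a ha
        by_contra hga
        have h1 := hgu (((|u| + 1) / g a) • a) (Mc.smul_mem _ ha)
        rw [map_smul, smul_eq_mul, div_mul_cancel₀ _ hga] at h1
        have := le_abs_self u
        linarith
      have hgz'0 : g z' = 0 := by
        have h1 : MapClusterPt (χ g) atTop (fun k => g (w (n k))) := clusterEval χ hχ g
        have h2 : Tendsto (fun k => g (w (n k))) atTop (𝓝 0) := by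
          have : (fun k => g (w (n k))) = fun _ => (0 : ℝ) := by
            funext k; exact hg0 _ (hwM k)
          rw [this]; exact tendsto_const_nhds
        have h3 : χ g = 0 := eq_of_nhds_neBot (ClusterPt.mono h1.clusterPt h2).neBot
        rw [← hχapp g, h3]
      have hg00 : (0 : ℝ) < u := by
        have := hgu 0 Mc.zero_mem
        rwa [map_zero] at this
      rw [hgz'0] at hguz
      linarith
    -- the difference has arbitrarily small norm
    have hzero : ∀ ε > (0 : ℝ), ‖J (z - z')‖ ≤ 3 * ε := by
      intro ε hε
      have hmem : z - z' ∈ closure (Msp : Set X) := by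
        rw [← Submodule.topologicalClosure_coe]
        exact Mc.sub_mem hzM hz'M
      obtain ⟨e, he, hde⟩ := Metric.mem_closure_iff.1 hmem ε hε
      obtain ⟨T, hT, heT⟩ := Submodule.mem_span_finite_of_mem_span he
      have hidx : ∃ k, (T : Set X) ⊆ insert z (w '' Set.Iic (n k)) := by
        set idx : X → ℕ := fun y => if h : ∃ i, w (n i) = y then h.choose else 0 with hidxdef
        refine ⟨T.sup idx, fun y hy => ?_⟩
        rcases hT hy with h | ⟨i, hi⟩
        · exact h ▸ Set.mem_insert _ _
        · have hex : ∃ j, w (n j) = y := ⟨i, hi⟩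
          right
          have hidxy : idx y = hex.choose := dif_pos hex
          refine ⟨n (idx y), ?_, ?_⟩
          · exact hmono.monotone (Finset.le_sup hy)
          · rw [hidxy]
            exact hex.choose_spec
      obtain ⟨k, hk⟩ := hidx
      have heE : J e ∈ Submodule.span ℝ (J '' insert z (w '' Set.Iic (n k))) := by
        erw [Submodule.span_image (J : X →ₗ[ℝ] StrongDual ℝ (StrongDual ℝ X))]
        exact Submodule.mem_map_of_mem (Submodule.span_mono hk heT)
      obtain ⟨f, hfΦ, hfnorm⟩ := hnorm' k (J e) heE
      have hf0 : J (z - z') f = 0 := key0 z' hψeval (k + 1) f hfΦ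
      have hfunit : ‖f‖ ≤ 1 := hunit' (k + 1) f hfΦ
      have hdiff : ‖J e - J (z - z')‖ < ε := by
        rw [← map_sub, hJnorm]
        rw [Metric.mem_closure_iff] at hmem
        calc ‖e - (z - z')‖ = dist e (z - z') := (dist_eq_norm _ _).symm
          _ = dist (z - z') e := dist_comm _ _
          _ < ε := hde
      have hJef : |J e f| ≤ ε := by
        have h1 : J e f = (J e - J (z - z')) f := by
          rw [ContinuousLinearMap.sub_apply, hf0, sub_zero]
        rw [h1]
        calc |(J e - J (z - z')) f| = ‖(J e - J (z - z')) f‖ := (Real.norm_eq_abs _).symm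
          _ ≤ ‖J e - J (z - z')‖ * ‖f‖ := (J e - J (z - z')).le_opNorm f
          _ ≤ ε * 1 := mul_le_mul hdiff.le hfunit (norm_nonneg _) hε.le
          _ = ε := mul_one ε
      calc ‖J (z - z')‖ ≤ ‖J e‖ + ‖J (z - z') - J e‖ := by
            have : J (z - z') = J e + (J (z - z') - J e) := by abel
            nth_rewrite 1 [this]
            exact norm_add_le (E := StrongDual ℝ (StrongDual ℝ X)) _ _
        _ ≤ 2 * |J e f| + ‖J e - J (z - z')‖ := by
            rw [norm_sub_rev (E := StrongDual ℝ (StrongDual ℝ X))]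
            exact add_le_add_left hfnorm _
        _ ≤ 2 * ε + ε := add_le_add (by linarith) hdiff.le
        _ = 3 * ε := by ring
    have hzz' : z = z' := by
      have h0 : ‖J (z - z')‖ ≤ 0 := by
        by_contra h
        push_neg at h
        have := hzero (‖J (z - z')‖ / 4) (by linarith)
        linarith
      have h1 : ‖z - z'‖ = 0 := le_antisymm (by rw [← hJnorm]; exact h0) (norm_nonneg _)
      exact sub_eq_zero.1 (norm_eq_zero.1 h1)
    apply WeakDual.toStrongDual.injective
    rw [← hz', ← hz, hzz']
  -- unique cluster point in a compact set implies convergence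
  have htendW : Tendsto Jwn atTop (𝓝 φ) :=
    hK.tendsto_nhds_of_unique_mapClusterPt (Eventually.of_forall fun k => hJwK (n k)) huniq
  refine ⟨z, n, hmono, fun f => ?_⟩
  have h1 : Tendsto (fun k => Jwn k f) atTop (𝓝 (φ f)) :=
    ((WeakDual.eval_continuous f).continuousAt.tendsto).comp htendW
  rw [hφapp f] at h1
  exact h1

end Aux

/-- In a reflexive Kadec real Banach space, every point of `Ω(C)` has a nearest point in
the nonempty closed set `C`, i.e. `Ω(C) ⊆ N(C)`. -/
theorem omegaSet_subset_nearestPoints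
    (X : Type*) [NormedAddCommGroup X] [NormedSpace ℝ X] [CompleteSpace X]
    (hrefl : IsReflexiveSpace X) (hkadec : IsKadecSpace X)
    (C : Set X) (hCclosed : IsClosed C) (hCne : C.Nonempty) :
    OmegaSet C ⊆ NearestPoints C := by
  rintro x ⟨hxC, f₀, hf₀norm, hf₀⟩
  set d := Metric.infDist x C with hd
  have hd0 : (0 : ℝ) ≤ d := infDist_nonneg
  -- a minimizing sequence
  have hseq : ∀ k : ℕ, ∃ y ∈ C, dist x y < d + 1 / (k + 1) := by
    intro k
    apply (infDist_lt_iff hCne).1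
    have : (0 : ℝ) < 1 / ((k : ℝ) + 1) := by positivity
    linarith
  choose y hyC hy using hseq
  have hy' : ∀ k : ℕ, ‖x - y k‖ < d + 1 / (k + 1) := by
    intro k
    rw [← dist_eq_norm]
    exact hy k
  have hbound : ∀ k, ‖y k‖ ≤ ‖x‖ + (d + 1) := by
    intro k
    have h1 : ‖y k‖ ≤ ‖x‖ + ‖x - y k‖ := by
      calc ‖y k‖ = ‖x - (x - y k)‖ := by rw [sub_sub_cancel]
        _ ≤ ‖x‖ + ‖x - y k‖ := norm_sub_le _ _
    have h2 : 1 / ((k : ℝ) + 1) ≤ 1 := by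
      rw [div_le_one (by positivity)]
      exact le_add_of_nonneg_left (Nat.cast_nonneg k)
    linarith [hy' k]
  obtain ⟨z, n, hmonon, hweak⟩ := reflexive_weak_seq_compact hrefl y (‖x‖ + (d + 1)) hbound
  -- convergence of norms of the minimizing subsequence
  have hnormconv : Tendsto (fun k => ‖x - y (n k)‖) atTop (𝓝 d) := by
    have hub : ∀ k : ℕ, ‖x - y (n k)‖ ≤ d + 1 / (k + 1) := by
      intro k
      have h1 : (k : ℝ) ≤ n k := by exact_mod_cast hmonon.le_apply
      have h2 : 1 / ((n k : ℝ) + 1) ≤ 1 / ((k : ℝ) + 1) :=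
        one_div_le_one_div_of_le (by positivity) (by linarith)
      linarith [hy' (n k)]
    have hlb : ∀ k : ℕ, d ≤ ‖x - y (n k)‖ := by
      intro k
      rw [← dist_eq_norm]
      exact infDist_le_dist_of_mem (hyC (n k))
    have hconst : Tendsto (fun _ : ℕ => d) atTop (𝓝 d) := tendsto_const_nhds
    have hupper : Tendsto (fun k : ℕ => d + 1 / ((k : ℝ) + 1)) atTop (𝓝 d) := by
      have := hconst.add tendsto_one_div_add_atTop_nhds_zero_nat
      simpa using this
    exact tendsto_of_tendsto_of_tendsto_of_le_of_le hconst hupper hlb hub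
  -- weak convergence of x - y (n k) to x - z
  have hweak' : ∀ f : X →L[ℝ] ℝ,
      Tendsto (fun k => f (x - y (n k))) atTop (𝓝 (f (x - z))) := by
    intro f
    have h1 : Tendsto (fun k => f x - f (y (n k))) atTop (𝓝 (f x - f z)) :=
      tendsto_const_nhds.sub (hweak f)
    simpa [map_sub] using h1
  -- lower bound on f₀ (x - z)
  have hf₀z : d ≤ f₀ (x - z) := by
    have hεbound : ∀ ε > (0 : ℝ), (1 - ε) * d ≤ f₀ (x - z) := by
      intro ε hε
      obtain ⟨δ, hδ, hsinf⟩ := hf₀ ε hε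
      have hev : ∀ᶠ k in atTop, (1 - ε) * d ≤ f₀ (x - y (n k)) := by
        obtain ⟨K, hK⟩ := exists_nat_gt (1 / δ)
        filter_upwards [eventually_ge_atTop K] with k hk
        have h1 : (k : ℝ) ≤ n k := by exact_mod_cast hmonon.le_apply
        have hKk : (K : ℝ) ≤ k := by exact_mod_cast hk
        have hδk : 1 / ((n k : ℝ) + 1) ≤ δ := by
          rw [div_le_iff₀ (by positivity)]
          rw [div_lt_iff₀ hδ] at hK
          nlinarith
        have hmem : y (n k) ∈ C ∩ Metric.closedBall x (d + δ) := by
          refine ⟨hyC (n k), ?_⟩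
          rw [Metric.mem_closedBall, dist_comm]
          linarith [hy (n k), hδk]
        have hmem2 : f₀ (x - y (n k)) ∈
            (fun w => f₀ (x - w)) '' (C ∩ Metric.closedBall x (d + δ)) :=
          Set.mem_image_of_mem _ hmem
        have hbdd : BddBelow ((fun w => f₀ (x - w)) '' (C ∩ Metric.closedBall x (d + δ))) := by
          refine ⟨-(d + δ), ?_⟩
          rintro a ⟨v, ⟨hvC, hvB⟩, rfl⟩
          have h2 : |f₀ (x - v)| ≤ ‖x - v‖ := by
            have := f₀.le_opNorm (x - v)
            rwa [hf₀norm, one_mul, Real.norm_eq_abs] at this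
          have h3 : ‖x - v‖ ≤ d + δ := by
            rw [← dist_eq_norm, dist_comm]
            exact Metric.mem_closedBall.1 hvB
          have := abs_le.1 (h2.trans h3)
          linarith [this.1]
        have := csInf_le hbdd hmem2
        linarith [hsinf]
      exact ge_of_tendsto (hweak' f₀) hev
    rcases hd0.eq_or_lt with heq | hlt
    · have := hεbound 1 one_pos
      rw [← heq] at this ⊢
      linarith
    · by_contra h
      push_neg at h
      have hε : (0 : ℝ) < (d - f₀ (x - z)) / (2 * d) :=
        div_pos (by linarith) (by linarith)
      have h5 := hεbound _ hε
      have h2 : (1 - (d - f₀ (x - z)) / (2 * d)) * d = d - (d - f₀ (x - z)) / 2 := by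
        field_simp
      rw [h2] at h5
      linarith
  -- upper bound on the norm
  have hxz_le : ‖x - z‖ ≤ d := by
    apply NormedSpace.norm_le_dual_bound ℝ (x - z) hd0
    intro g
    have h2 : Tendsto (fun k => ‖g (x - y (n k))‖) atTop (𝓝 ‖g (x - z)‖) := (hweak' g).norm
    have h3 : Tendsto (fun k => ‖g‖ * ‖x - y (n k)‖) atTop (𝓝 (‖g‖ * d)) :=
      tendsto_const_nhds.mul hnormconv
    have h4 := le_of_tendsto_of_tendsto' h2 h3 (fun k => g.le_opNorm _)
    linarith [h4, mul_comm ‖g‖ d]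
  have hxz_eq : ‖x - z‖ = d := by
    refine le_antisymm hxz_le ?_
    have h1 : f₀ (x - z) ≤ ‖x - z‖ := by
      have := f₀.le_opNorm (x - z)
      rw [hf₀norm, one_mul] at this
      exact (le_abs_self _).trans (by rwa [Real.norm_eq_abs] at this)
    linarith
  -- Kadec property gives norm convergence
  have hkad : Tendsto (fun k => x - y (n k)) atTop (𝓝 (x - z)) := by
    apply hkadec _ _ hweak'
    rw [hxz_eq]
    exact hnormconv
  have hyconv : Tendsto (fun k => y (n k)) atTop (𝓝 z) := by
    have := (tendsto_const_nhds (x := x) (f := atTop (α := ℕ))).sub hkad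
    simpa using this
  have hzC : z ∈ C := hCclosed.mem_of_tendsto hyconv (Eventually.of_forall fun k => hyC (n k))
  exact ⟨z, hzC, hxz_eq⟩
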